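/- Let X be a perfect Polish space and T : X → X continuous. Then there exists a dense subset X₀ ⊆ X which is Polish (i.e. Gδ in X), nowhere locally compact, and satisfies T(X₀) ⊆ X₀. -/

import Mathlib

theorem dense_invariant_nowhere_locally_compact_subset
    {X : Type*} [TopologicalSpace X] [PolishSpace X] [PerfectSpace X]
    (T : X → X) (hT : Continuous T) :
    ∃ X₀ : Set X, Dense X₀ ∧ IsGδ X₀ ∧ T '' X₀ ⊆ X₀ ∧
      ∀ x : X₀, ¬ ∃ K : Set X₀, K ∈ nhds x ∧ IsCompact K := by
  letI := TopologicalSpace.upgradeIsCompletelyMetrizable X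
  obtain ⟨D₀, hD₀c, hD₀d⟩ := TopologicalSpace.exists_countable_dense X
  -- B : the set of "bad" values whose iterate-fibers have nonempty interior
  set B : Set X := {e | ∃ n : ℕ, (interior (T^[n] ⁻¹' {e})).Nonempty} with hBdef
  have hBc : B.Countable := by
    have hBeq : B = ⋃ n : ℕ, {e | (interior (T^[n] ⁻¹' {e})).Nonempty} := by
      ext e; simp [hBdef]
    rw [hBeq]
    refine Set.countable_iUnion fun n => ?_
    have key : ∀ e : X, ∃ d : X,
        e ∈ {e | (interior (T^[n] ⁻¹' {e})).Nonempty} → d ∈ D₀ ∧ T^[n] d = e := by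
      intro e
      by_cases he : e ∈ {e | (interior (T^[n] ⁻¹' {e})).Nonempty}
      · obtain ⟨d, hd1, hd2⟩ := hD₀d.inter_open_nonempty _ isOpen_interior he
        have hd3 : d ∈ T^[n] ⁻¹' {e} := interior_subset hd1
        exact ⟨d, fun _ => ⟨hd2, hd3⟩⟩
      · exact ⟨e, fun h => absurd h he⟩
    choose f hf using key
    refine Set.countable_of_injective_of_countable_image ?_
      (hD₀c.mono (Set.image_subset_iff.2 fun e he => (hf e he).1))
    intro a ha b hb hab
    rw [← (hf a ha).2, ← (hf b hb).2, hab]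
  -- the complement of B is dense
  have hBcd : Dense (Bᶜ) := by
    have hB2 : Bᶜ = ⋂ b : B, ({(b : X)}ᶜ) := by
      ext x
      simp only [Set.mem_compl_iff, Set.mem_iInter, Set.mem_singleton_iff]
      constructor
      · rintro hx ⟨b, hb⟩ h; exact hx (h ▸ hb)
      · intro h hx; exact h ⟨x, hx⟩ rfl
    haveI := hBc.to_subtype
    rw [hB2]
    exact dense_iInter_of_isOpen (fun b => isOpen_compl_singleton)
      (fun b => dense_compl_singleton _)
  -- a countable dense set E inside Bᶜ
  obtain ⟨s, hsc, hsd⟩ := TopologicalSpace.exists_countable_dense ↥(Bᶜ)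
  set E : Set X := Subtype.val '' s with hEdef
  have hEc : E.Countable := hsc.image _
  have hEB : E ⊆ Bᶜ := by rintro _ ⟨y, -, rfl⟩; exact y.2
  have hEd : Dense E := by
    have h1 : Bᶜ ⊆ closure E := fun x hx => closure_subtype.mp (hsd ⟨x, hx⟩)
    intro x
    have h2 := closure_mono h1 (hBcd x)
    rwa [closure_closure] at h2
  haveI := hEc.to_subtype
  -- the meager forbidden set C and its complement X₀
  set C : Set X := ⋃ p : ℕ × E, T^[p.1] ⁻¹' {(p.2 : X)} with hCdef
  have hfibcl : ∀ p : ℕ × E, IsClosed (T^[p.1] ⁻¹' {(p.2 : X)}) :=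
    fun p => isClosed_singleton.preimage (hT.iterate p.1)
  have hfibint : ∀ p : ℕ × E, interior (T^[p.1] ⁻¹' {(p.2 : X)}) = ∅ := by
    intro p
    by_contra h
    exact hEB p.2.2 ⟨p.1, Set.nonempty_iff_ne_empty.2 h⟩
  set X₀ : Set X := Cᶜ with hX₀def
  have hX₀eq : X₀ = ⋂ p : ℕ × E, (T^[p.1] ⁻¹' {(p.2 : X)})ᶜ := by
    rw [hX₀def, hCdef, Set.compl_iUnion]
  have hEC : E ⊆ C := by
    intro e he
    exact Set.mem_iUnion.2 ⟨(0, ⟨e, he⟩), by simp⟩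
  have hCd : Dense C := hEd.mono hEC
  have hX₀d : Dense X₀ := by
    rw [hX₀eq]
    exact dense_iInter_of_isOpen (fun p => (hfibcl p).isOpen_compl)
      (fun p => interior_eq_empty_iff_dense_compl.1 (hfibint p))
  refine ⟨X₀, hX₀d, ?_, ?_, ?_⟩
  · -- Gδ
    rw [hX₀eq]
    exact IsGδ.iInter_of_isOpen fun p => (hfibcl p).isOpen_compl
  · -- invariance
    rintro _ ⟨x, hx, rfl⟩
    intro hTx
    rw [hCdef] at hTx
    obtain ⟨⟨n, e⟩, hne⟩ := Set.mem_iUnion.1 hTx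
    refine hx (Set.mem_iUnion.2 ⟨(n + 1, e), ?_⟩)
    simp only [Set.mem_preimage, Set.mem_singleton_iff] at hne ⊢
    rw [Function.iterate_succ_apply]
    exact hne
  · -- nowhere locally compact
    rintro ⟨x, hx⟩ ⟨K, hK, hKc⟩
    have hKc' : IsCompact (Subtype.val '' K : Set X) := hKc.image continuous_subtype_val
    have hKcl : IsClosed (Subtype.val '' K : Set X) := hKc'.isClosed
    obtain ⟨t, ht, htK⟩ := (mem_nhds_subtype X₀ ⟨x, hx⟩ K).1 hK
    obtain ⟨U, hUt, hUo, hxU⟩ := mem_nhds_iff.1 ht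
    have hUK : U ∩ X₀ ⊆ Subtype.val '' K := by
      rintro y ⟨hyU, hy₀⟩
      exact ⟨⟨y, hy₀⟩, htK (hUt hyU), rfl⟩
    have hUsub : U ⊆ X₀ := by
      intro y hy
      have h1 : y ∈ closure (U ∩ X₀) := hX₀d.open_subset_closure_inter hUo hy
      have h2 : y ∈ Subtype.val '' K := by
        rw [← hKcl.closure_eq]
        exact closure_mono hUK h1
      obtain ⟨⟨z, hz⟩, -, rfl⟩ := h2
      exact hz
    obtain ⟨c, hcU, hcC⟩ := hCd.inter_open_nonempty U hUo ⟨x, hxU⟩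
    exact hUsub hcU hcC
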